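/- Let ℓ_1,...,ℓ_N > 0 and let 𝒩 = { 2π √((k² + l² + kl)/3) : k, l ∈ ℕ* }. The following are equivalent: (i) there exist λ_1,...,λ_N ∈ ℂ and a nonzero y = (y_1,...,y_N) with y_i ∈ H^3(0,ℓ_i) satisfying λ_i y_i + y_i' + y_i''' = 0, y_i(ℓ_i) = y_i'(ℓ_i) = 0, y_i(0) = y_i'(0) = 0 for all i, and Σ_{i=1}^N y_i''(0) = 0; (ii) at least two of the lengths ℓ_1,...,ℓ_N belong to 𝒩. -/

import Mathlib

open scoped BigOperators
open MeasureTheory intervalIntegral Real Set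

/-- The set of critical lengths of Rosier. -/
def IsCriticalLength (x : ℝ) : Prop :=
  ∃ k l : ℕ, 1 ≤ k ∧ 1 ≤ l ∧
    x = 2 * Real.pi * Real.sqrt (((k : ℝ)^2 + (l : ℝ)^2 + (k : ℝ) * (l : ℝ)) / 3)

open Complex Polynomial

noncomputable def mf (a b μ : ℂ) : ℝ → ℂ := fun x => (a + b * x) * Complex.exp (μ * x)

lemma contDiff_ofReal : ContDiff ℝ 3 (fun x : ℝ => (x : ℂ)) :=
  Complex.ofRealCLM.contDiff

lemma mf_hasDerivAt (a b μ : ℂ) (x : ℝ) :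
    HasDerivAt (mf a b μ) (mf (a*μ+b) (b*μ) μ x) x := by
  have h1 : HasDerivAt (fun x : ℝ => a + b * (x:ℂ)) b x := by
    simpa using ((hasDerivAt_id (x:ℂ)).const_mul b).comp_ofReal.const_add a
  have h2 : HasDerivAt (fun x : ℝ => Complex.exp (μ * x)) (μ * Complex.exp (μ * x)) x := by
    have : HasDerivAt (fun z : ℂ => Complex.exp (μ * z)) (μ * Complex.exp (μ * x)) (x:ℂ) := by
      have h0 := ((hasDerivAt_id (x:ℂ)).const_mul μ).cexp
      simp only [id, mul_one] at h0
      rw [mul_comm] at h0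
      exact h0
    exact this.comp_ofReal
  have h : HasDerivAt (fun x : ℝ => (a + b * (x:ℂ)) * Complex.exp (μ * x)) _ x := h1.mul h2
  refine h.congr_deriv ?_
  simp [mf]; ring

lemma mf_contDiff (a b μ : ℂ) : ContDiff ℝ 3 (mf a b μ) := by
  have he : ContDiff ℝ 3 (fun x : ℝ => Complex.exp (μ * x)) :=
    ((Complex.contDiff_exp : ContDiff ℂ 3 Complex.exp).restrict_scalars ℝ).comp (contDiff_const.mul contDiff_ofReal)
  exact (contDiff_const.add (contDiff_const.mul contDiff_ofReal)).mul he

lemma mf_deriv (a b μ : ℂ) : deriv (mf a b μ) = mf (a*μ+b) (b*μ) μ := by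
  funext x; exact (mf_hasDerivAt a b μ x).deriv

lemma mf_zero (a b μ : ℂ) : mf a b μ 0 = a := by simp [mf]

lemma mf_apply (a b μ : ℂ) (x : ℝ) : mf a b μ x = (a + b * x) * Complex.exp (μ * x) := rfl

noncomputable def W3 (a₁ b₁ μ₁ a₂ b₂ μ₂ a₃ b₃ μ₃ : ℂ) : ℝ → ℂ :=
  fun x => mf a₁ b₁ μ₁ x + mf a₂ b₂ μ₂ x + mf a₃ b₃ μ₃ x

lemma W3_hasDerivAt (a₁ b₁ μ₁ a₂ b₂ μ₂ a₃ b₃ μ₃ : ℂ) (x : ℝ) :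
    HasDerivAt (W3 a₁ b₁ μ₁ a₂ b₂ μ₂ a₃ b₃ μ₃)
      (W3 (a₁*μ₁+b₁) (b₁*μ₁) μ₁ (a₂*μ₂+b₂) (b₂*μ₂) μ₂ (a₃*μ₃+b₃) (b₃*μ₃) μ₃ x) x :=
  ((mf_hasDerivAt a₁ b₁ μ₁ x).add (mf_hasDerivAt a₂ b₂ μ₂ x)).add (mf_hasDerivAt a₃ b₃ μ₃ x)

lemma W3_deriv (a₁ b₁ μ₁ a₂ b₂ μ₂ a₃ b₃ μ₃ : ℂ) :
    deriv (W3 a₁ b₁ μ₁ a₂ b₂ μ₂ a₃ b₃ μ₃)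
      = W3 (a₁*μ₁+b₁) (b₁*μ₁) μ₁ (a₂*μ₂+b₂) (b₂*μ₂) μ₂ (a₃*μ₃+b₃) (b₃*μ₃) μ₃ := by
  funext x; exact (W3_hasDerivAt a₁ b₁ μ₁ a₂ b₂ μ₂ a₃ b₃ μ₃ x).deriv

lemma W3_contDiff (a₁ b₁ μ₁ a₂ b₂ μ₂ a₃ b₃ μ₃ : ℂ) :
    ContDiff ℝ 3 (W3 a₁ b₁ μ₁ a₂ b₂ μ₂ a₃ b₃ μ₃) :=
  ((mf_contDiff a₁ b₁ μ₁).add (mf_contDiff a₂ b₂ μ₂)).add (mf_contDiff a₃ b₃ μ₃)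

lemma W3_itd2 (a₁ b₁ μ₁ a₂ b₂ μ₂ a₃ b₃ μ₃ : ℂ) :
    iteratedDeriv 2 (W3 a₁ b₁ μ₁ a₂ b₂ μ₂ a₃ b₃ μ₃)
      = W3 (a₁*μ₁^2+2*b₁*μ₁) (b₁*μ₁^2) μ₁ (a₂*μ₂^2+2*b₂*μ₂) (b₂*μ₂^2) μ₂
           (a₃*μ₃^2+2*b₃*μ₃) (b₃*μ₃^2) μ₃ := by
  rw [iteratedDeriv_succ, iteratedDeriv_one, W3_deriv, W3_deriv]
  ring_nf

lemma W3_itd3 (a₁ b₁ μ₁ a₂ b₂ μ₂ a₃ b₃ μ₃ : ℂ) :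
    iteratedDeriv 3 (W3 a₁ b₁ μ₁ a₂ b₂ μ₂ a₃ b₃ μ₃)
      = W3 (a₁*μ₁^3+3*b₁*μ₁^2) (b₁*μ₁^3) μ₁ (a₂*μ₂^3+3*b₂*μ₂^2) (b₂*μ₂^3) μ₂
           (a₃*μ₃^3+3*b₃*μ₃^2) (b₃*μ₃^3) μ₃ := by
  rw [iteratedDeriv_succ, W3_itd2, W3_deriv]
  ring_nf

lemma W3_zero (a₁ b₁ μ₁ a₂ b₂ μ₂ a₃ b₃ μ₃ : ℂ) :
    W3 a₁ b₁ μ₁ a₂ b₂ μ₂ a₃ b₃ μ₃ 0 = a₁ + a₂ + a₃ := by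
  simp [W3, mf]

lemma cd_succ {f : ℝ → ℂ} {n : ℕ} (h : ContDiff ℝ (n+1 : ℕ) f) :
    Differentiable ℝ f ∧ ContDiff ℝ n (deriv f) := by
  have : ContDiff ℝ ((n : ℕ∞) + 1) f := by exact_mod_cast h
  exact ⟨(contDiff_succ_iff_deriv.mp this).1, (contDiff_succ_iff_deriv.mp this).2.2⟩

lemma itd2_eq (f : ℝ → ℂ) : iteratedDeriv 2 f = deriv (deriv f) := by
  rw [iteratedDeriv_succ, iteratedDeriv_one]

lemma itd3_eq (f : ℝ → ℂ) : iteratedDeriv 3 f = deriv (deriv (deriv f)) := by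
  rw [iteratedDeriv_succ, itd2_eq]

noncomputable def Vfield (lam : ℂ) : (ℂ × ℂ × ℂ) →L[ℝ] (ℂ × ℂ × ℂ) :=
  ((ContinuousLinearMap.fst ℝ ℂ ℂ).comp (ContinuousLinearMap.snd ℝ ℂ (ℂ × ℂ))).prod
    ((((ContinuousLinearMap.snd ℝ ℂ ℂ).comp (ContinuousLinearMap.snd ℝ ℂ (ℂ × ℂ)))).prod
      (-((ContinuousLinearMap.fst ℝ ℂ ℂ).comp (ContinuousLinearMap.snd ℝ ℂ (ℂ × ℂ)))
        - lam • (ContinuousLinearMap.fst ℝ ℂ (ℂ × ℂ))))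

lemma Vfield_apply (lam : ℂ) (u : ℂ × ℂ × ℂ) :
    Vfield lam u = (u.2.1, u.2.2, -u.2.1 - lam * u.1) := by
  simp [Vfield]

lemma ode_unique (lam : ℂ) (L : ℝ) (f g : ℝ → ℂ)
    (hf : ContDiff ℝ 3 f) (hg : ContDiff ℝ 3 g)
    (hfe : ∀ x ∈ Icc (0:ℝ) L, lam * f x + deriv f x + iteratedDeriv 3 f x = 0)
    (hge : ∀ x ∈ Icc (0:ℝ) L, lam * g x + deriv g x + iteratedDeriv 3 g x = 0)
    (h0 : f 0 = g 0) (h1 : deriv f 0 = deriv g 0)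
    (h2 : iteratedDeriv 2 f 0 = iteratedDeriv 2 g 0) :
    EqOn f g (Icc 0 L) := by
  have key : ∀ (p : ℝ → ℂ), ContDiff ℝ 3 p →
      (∀ x ∈ Icc (0:ℝ) L, lam * p x + deriv p x + iteratedDeriv 3 p x = 0) →
      (ContinuousOn (fun t => (p t, deriv p t, iteratedDeriv 2 p t)) (Icc 0 L) ∧
        ∀ t ∈ Ico (0:ℝ) L, HasDerivWithinAt (fun t => (p t, deriv p t, iteratedDeriv 2 p t))
          (Vfield lam (p t, deriv p t, iteratedDeriv 2 p t)) (Ici t) t) := by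
    intro p hp hpe
    have hd1 : Differentiable ℝ p := (cd_succ (n := 2) hp).1
    have hcd2 : ContDiff ℝ 2 (deriv p) := (cd_succ (n := 2) hp).2
    have hd2 : Differentiable ℝ (deriv p) := (cd_succ (n := 1) hcd2).1
    have hcd1 : ContDiff ℝ 1 (deriv (deriv p)) := (cd_succ (n := 1) hcd2).2
    have hd3 : Differentiable ℝ (deriv (deriv p)) := (cd_succ (n := 0) hcd1).1
    constructor
    · refine Continuous.continuousOn ?_
      exact hd1.continuous.prodMk ((hd2.continuous).prodMk ((itd2_eq p) ▸ hd3.continuous))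
    · intro t ht
      have hda : HasDerivAt (fun t => (p t, deriv p t, iteratedDeriv 2 p t))
          (deriv p t, deriv (deriv p) t, deriv (deriv (deriv p)) t) t := by
        refine HasDerivAt.prodMk (hd1 t).hasDerivAt (HasDerivAt.prodMk (hd2 t).hasDerivAt ?_)
        rw [itd2_eq]
        exact (hd3 t).hasDerivAt
      have heq : (deriv p t, deriv (deriv p) t, deriv (deriv (deriv p)) t)
          = Vfield lam (p t, deriv p t, iteratedDeriv 2 p t) := by
        rw [Vfield_apply]
        have := hpe t (Ico_subset_Icc_self ht)
        rw [itd3_eq] at this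
        refine Prod.ext rfl (Prod.ext ?_ ?_) <;> simp [itd2_eq]
        linear_combination this
      exact (heq ▸ hda).hasDerivWithinAt
  obtain ⟨hfc, hfd⟩ := key f hf hfe
  obtain ⟨hgc, hgd⟩ := key g hg hge
  have main : EqOn (fun t => (f t, deriv f t, iteratedDeriv 2 f t))
      (fun t => (g t, deriv g t, iteratedDeriv 2 g t)) (Icc 0 L) := by
    refine ODE_solution_unique_of_mem_Icc_right
      (v := fun _ u => Vfield lam u) (s := fun _ => univ)
      (K := ‖Vfield lam‖₊) (fun _ _ => ((Vfield lam).lipschitz).lipschitzOnWith)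
      hfc hfd (fun _ _ => trivial) hgc hgd (fun _ _ => trivial) ?_
    simp [h0, h1, h2]
  intro t ht
  exact congrArg Prod.fst (main ht)

lemma eqOn_derivs {f g : ℝ → ℂ} (hf : ContDiff ℝ 3 f) (hg : ContDiff ℝ 3 g)
    {a b : ℝ} (hab : a < b) (h : EqOn f g (Icc a b)) :
    EqOn (deriv f) (deriv g) (Icc a b) ∧
      EqOn (iteratedDeriv 2 f) (iteratedDeriv 2 g) (Icc a b) := by
  have hd1f : Differentiable ℝ f := (cd_succ (n := 2) hf).1
  have hcd2f : ContDiff ℝ 2 (deriv f) := (cd_succ (n := 2) hf).2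
  have hd2f : Differentiable ℝ (deriv f) := (cd_succ (n := 1) hcd2f).1
  have hcd1f : ContDiff ℝ 1 (deriv (deriv f)) := (cd_succ (n := 1) hcd2f).2
  have hd1g : Differentiable ℝ g := (cd_succ (n := 2) hg).1
  have hcd2g : ContDiff ℝ 2 (deriv g) := (cd_succ (n := 2) hg).2
  have hd2g : Differentiable ℝ (deriv g) := (cd_succ (n := 1) hcd2g).1
  have hcd1g : ContDiff ℝ 1 (deriv (deriv g)) := (cd_succ (n := 1) hcd2g).2
  have hIoo : EqOn (deriv f) (deriv g) (Ioo a b) := by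
    intro t ht
    have : f =ᶠ[nhds t] g :=
      Filter.eventuallyEq_of_mem (Ioo_mem_nhds ht.1 ht.2) (fun x hx => h (Ioo_subset_Icc_self hx))
    exact this.deriv_eq
  have hIcc1 : EqOn (deriv f) (deriv g) (Icc a b) := by
    have := hIoo.closure hd2f.continuous hd2g.continuous
    rwa [closure_Ioo hab.ne] at this
  refine ⟨hIcc1, ?_⟩
  have hIoo2 : EqOn (deriv (deriv f)) (deriv (deriv g)) (Ioo a b) := by
    intro t ht
    have : deriv f =ᶠ[nhds t] deriv g :=
      Filter.eventuallyEq_of_mem (Ioo_mem_nhds ht.1 ht.2) (fun x hx => hIoo hx)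
    exact this.deriv_eq
  have hIcc2 : EqOn (deriv (deriv f)) (deriv (deriv g)) (Icc a b) := by
    have := hIoo2.closure hcd1f.continuous hcd1g.continuous
    rwa [closure_Ioo hab.ne] at this
  rw [itd2_eq, itd2_eq]
  exact hIcc2

lemma exists_three_roots (lam : ℂ) :
    ∃ μ₁ μ₂ μ₃ : ℂ, μ₁ + μ₂ + μ₃ = 0 ∧ μ₁*μ₂ + μ₁*μ₃ + μ₂*μ₃ = 1 ∧ μ₁*μ₂*μ₃ = -lam := by
  obtain ⟨μ₁, hμ₁⟩ : ∃ z : ℂ, z^3 + z + lam = 0 := by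
    have hdeg : (X^3 + X + C lam : ℂ[X]).degree ≠ 0 := by
      have : (X^3 + X + C lam : ℂ[X]).degree = 3 := by compute_degree!
      simp [this]
    obtain ⟨z, hz⟩ := Complex.isAlgClosed.exists_root _ hdeg
    refine ⟨z, ?_⟩
    have := hz
    simpa [IsRoot, eval_add, eval_pow] using this
  obtain ⟨s, hs⟩ : ∃ s : ℂ, s^2 = -3*μ₁^2 - 4 := by
    rcases IsAlgClosed.exists_pow_nat_eq (-3*μ₁^2 - 4 : ℂ) (n := 2) (by norm_num) with ⟨s, hs⟩
    exact ⟨s, hs⟩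
  refine ⟨μ₁, (-μ₁ + s)/2, (-μ₁ - s)/2, by ring, by linear_combination (-1/4 : ℂ) * hs, ?_⟩
  linear_combination (-μ₁/4) * hs + hμ₁

noncomputable def Wd (μ₁ μ₂ μ₃ c : ℂ) : ℝ → ℂ :=
  W3 (c*(μ₂-μ₃)) 0 μ₁ (c*(μ₃-μ₁)) 0 μ₂ (c*(μ₁-μ₂)) 0 μ₃

lemma Wd_zero (μ₁ μ₂ μ₃ c : ℂ) : Wd μ₁ μ₂ μ₃ c 0 = 0 := by
  simp only [Wd, W3, mf]; push_cast; norm_num [Complex.exp_zero]; ring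

lemma Wd_deriv_zero (μ₁ μ₂ μ₃ c : ℂ) : deriv (Wd μ₁ μ₂ μ₃ c) 0 = 0 := by
  rw [Wd, W3_deriv]; simp only [W3, mf]; push_cast; norm_num [Complex.exp_zero]; ring

lemma Wd_itd2_zero (μ₁ μ₂ μ₃ c : ℂ) :
    iteratedDeriv 2 (Wd μ₁ μ₂ μ₃ c) 0 = -c*((μ₁-μ₂)*(μ₂-μ₃)*(μ₃-μ₁)) := by
  rw [Wd, W3_itd2]; simp only [W3, mf]; push_cast; norm_num [Complex.exp_zero]; ring

lemma Wd_ode (μ₁ μ₂ μ₃ c : ℂ) (lam : ℂ) (hr1 : μ₁^3 + μ₁ + lam = 0) (hr2 : μ₂^3 + μ₂ + lam = 0)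
    (hr3 : μ₃^3 + μ₃ + lam = 0) (x : ℝ) :
    lam * Wd μ₁ μ₂ μ₃ c x + deriv (Wd μ₁ μ₂ μ₃ c) x
      + iteratedDeriv 3 (Wd μ₁ μ₂ μ₃ c) x = 0 := by
  rw [Wd, W3_deriv, W3_itd3]
  simp only [W3, mf]
  linear_combination (c*(μ₂-μ₃) * Complex.exp (μ₁ * x)) * hr1
    + (c*(μ₃-μ₁) * Complex.exp (μ₂ * x)) * hr2
    + (c*(μ₁-μ₂) * Complex.exp (μ₃ * x)) * hr3

lemma Wd_boundary {μ₁ μ₂ μ₃ c : ℂ} (hc : c ≠ 0) (h12 : μ₁ ≠ μ₂) (h13 : μ₁ ≠ μ₃) (h23 : μ₂ ≠ μ₃)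
    {L : ℝ} (hw : Wd μ₁ μ₂ μ₃ c L = 0) (hw' : deriv (Wd μ₁ μ₂ μ₃ c) L = 0) :
    Complex.exp (μ₁ * L) = Complex.exp (μ₂ * L) ∧
      Complex.exp (μ₁ * L) = Complex.exp (μ₃ * L) := by
  set E₁ := Complex.exp (μ₁ * L) with hE₁
  set E₂ := Complex.exp (μ₂ * L) with hE₂
  set E₃ := Complex.exp (μ₃ * L) with hE₃
  have H4 : (μ₂-μ₃)*E₁ + (μ₃-μ₁)*E₂ + (μ₁-μ₂)*E₃ = 0 := by
    have h4 : c * ((μ₂-μ₃)*E₁ + (μ₃-μ₁)*E₂ + (μ₁-μ₂)*E₃) = 0 := by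
      simp only [Wd, W3, mf] at hw
      linear_combination hw
    exact (mul_eq_zero.mp h4).resolve_left hc
  have H5 : (μ₂-μ₃)*μ₁*E₁ + (μ₃-μ₁)*μ₂*E₂ + (μ₁-μ₂)*μ₃*E₃ = 0 := by
    have h5 : c * ((μ₂-μ₃)*μ₁*E₁ + (μ₃-μ₁)*μ₂*E₂ + (μ₁-μ₂)*μ₃*E₃) = 0 := by
      rw [Wd, W3_deriv] at hw'; simp only [W3, mf] at hw'
      linear_combination hw'
    exact (mul_eq_zero.mp h5).resolve_left hc
  constructor
  · have hEE : (μ₂-μ₃)*(μ₃-μ₁)*(E₁-E₂) = 0 := by linear_combination μ₃*H4 - H5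
    rcases mul_eq_zero.mp hEE with h | h
    · rcases mul_eq_zero.mp h with h' | h'
      · exact absurd (sub_eq_zero.mp h') h23
      · exact absurd (sub_eq_zero.mp h') (fun h'' => h13 h''.symm)
    · exact sub_eq_zero.mp h
  · have hEE : (μ₂-μ₃)*(μ₂-μ₁)*(E₁-E₃) = 0 := by linear_combination μ₂*H4 - H5
    rcases mul_eq_zero.mp hEE with h | h
    · rcases mul_eq_zero.mp h with h' | h'
      · exact absurd (sub_eq_zero.mp h') h23
      · exact absurd (sub_eq_zero.mp h') (fun h'' => h12 h''.symm)
    · exact sub_eq_zero.mp h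

lemma mu_re_im {μ : ℂ} (hμ : μ^2 = -1/3) : μ.re = 0 ∧ μ.im^2 = 1/3 := by
  have h1 : (μ^2).re = -1/3 := by rw [hμ]; norm_num
  have h2 : (μ^2).im = 0 := by rw [hμ]; norm_num
  rw [pow_two] at h1 h2
  simp only [Complex.mul_re, Complex.mul_im] at h1 h2
  by_cases him : μ.im = 0
  · exfalso; rw [him] at h1; nlinarith [sq_nonneg μ.re]
  · have hre : μ.re = 0 := by
      have hmm : μ.re * μ.im = 0 := by linarith
      exact (mul_eq_zero.mp hmm).resolve_right him
    refine ⟨hre, ?_⟩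
    rw [hre] at h1
    nlinarith [h1]

lemma double_root_false (L : ℝ) (hL : 0 < L) (μ lam : ℂ) (hμ : μ^2 = -1/3)
    (hlam : lam = 2*μ^3) (y : ℝ → ℂ) (hy : ContDiff ℝ 3 y)
    (hODE : ∀ x ∈ Icc (0:ℝ) L, lam * y x + deriv y x + iteratedDeriv 3 y x = 0)
    (h00 : y 0 = 0) (h01 : deriv y 0 = 0) (hc : iteratedDeriv 2 y 0 ≠ 0)
    (hyL : y L = 0) : False := by
  set c := iteratedDeriv 2 y 0 with hcdef
  set w := W3 (-c/3) 0 (-2*μ) (c/3) (-c*μ) μ 0 0 0 with hw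
  have hw0 : w 0 = 0 := by simp [hw, W3, mf]; ring
  have hw1 : deriv w 0 = 0 := by
    rw [hw, W3_deriv]; simp only [W3, mf]; norm_num [Complex.exp_zero]; ring
  have hw2 : iteratedDeriv 2 w 0 = c := by
    rw [hw, W3_itd2]; simp only [W3, mf]; push_cast; norm_num [Complex.exp_zero]
    linear_combination (-3*c) * hμ
  have hwode : ∀ x ∈ Icc (0:ℝ) L, lam * w x + deriv w x + iteratedDeriv 3 w x = 0 := by
    intro x _
    rw [hw, W3_deriv, W3_itd3]
    simp only [W3, mf]
    rw [hlam]
    linear_combination (2*c*μ*Complex.exp (-2*μ*(x:ℝ))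
      + (-2*c*μ - 3*c*μ^2*(x:ℝ))*Complex.exp (μ*(x:ℝ))) * hμ
  have heq : EqOn y w (Icc 0 L) :=
    ode_unique lam L y w hy (W3_contDiff _ _ _ _ _ _ _ _ _) hODE hwode
      (by rw [h00, hw0]) (by rw [h01, hw1]) (by rw [hw2])
  have hwL : w L = 0 := by
    rw [← heq (right_mem_Icc.mpr hL.le)]; exact hyL
  have hEe : Complex.exp (-2*μ*L) = (1 - 3*μ*L) * Complex.exp (μ*L) := by
    have h' : c * (Complex.exp (-2*μ*L) - (1 - 3*μ*L) * Complex.exp (μ*L)) = 0 := by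
      simp only [hw, W3, mf] at hwL
      linear_combination -3 * hwL
    exact sub_eq_zero.mp ((mul_eq_zero.mp h').resolve_left hc)
  obtain ⟨hre, him⟩ := mu_re_im hμ
  have habs := congrArg (‖·‖) hEe
  rw [norm_mul, Complex.norm_exp, Complex.norm_exp] at habs
  have hre1 : (-2*μ*(L:ℂ)).re = 0 := by
    simp [Complex.mul_re, hre]
  have hre2 : (μ*(L:ℂ)).re = 0 := by
    simp [Complex.mul_re, hre]
  rw [hre1, hre2] at habs
  simp only [Real.exp_zero, mul_one] at habs
  have hnsq : Complex.normSq (1 - 3*μ*(L:ℂ)) = 1 := by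
    have := congrArg (fun t : ℝ => t^2) habs.symm
    simpa [Complex.sq_norm] using this
  have hre3 : (1 - 3*μ*(L:ℂ)).re = 1 := by simp [Complex.mul_re, hre]
  have him3 : (1 - 3*μ*(L:ℂ)).im = -3*L*μ.im := by simp [Complex.mul_im, hre]; ring
  rw [Complex.normSq_apply, hre3, him3] at hnsq
  have him' : μ.im * μ.im = 1/3 := by rw [← pow_two]; exact him
  nlinarith [mul_pos hL hL, hnsq, him']

lemma int_form {n m : ℤ} (hn : n ≠ 0) (hm : m ≠ 0) (hnm : n ≠ m) :
    ∃ k l : ℕ, 1 ≤ k ∧ 1 ≤ l ∧ (k:ℤ)^2 + (l:ℤ)^2 + (k:ℤ)*(l:ℤ) = n^2 - n*m + m^2 := by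
  have key : ∃ K L : ℤ, 1 ≤ K ∧ 1 ≤ L ∧ K^2 + L^2 + K*L = n^2 - n*m + m^2 := by
    rcases lt_trichotomy n 0 with hn' | hn' | hn'
    · rcases lt_trichotomy m 0 with hm' | hm' | hm'
      · -- both negative
        rcases lt_or_gt_of_ne hnm with h | h
        · exact ⟨-m, m - n, by omega, by omega, by ring⟩
        · exact ⟨-n, n - m, by omega, by omega, by ring⟩
      · exact absurd hm' hm
      · exact ⟨-n, m, by omega, by omega, by ring⟩
    · exact absurd hn' hn
    · rcases lt_trichotomy m 0 with hm' | hm' | hm'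
      · exact ⟨n, -m, by omega, by omega, by ring⟩
      · exact absurd hm' hm
      · rcases lt_or_gt_of_ne hnm with h | h
        · exact ⟨n, m - n, by omega, by omega, by ring⟩
        · exact ⟨m, n - m, by omega, by omega, by ring⟩
  obtain ⟨K, L, hK, hL, hid⟩ := key
  refine ⟨K.toNat, L.toNat, by omega, by omega, ?_⟩
  rw [Int.toNat_of_nonneg (by omega), Int.toNat_of_nonneg (by omega)]
  exact hid

lemma critical_of_sq {L : ℝ} (hL : 0 < L) {n m : ℤ} (hn : n ≠ 0) (hm : m ≠ 0) (hnm : n ≠ m)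
    (hR : 3 * L^2 = 4 * Real.pi^2 * ((n:ℝ)^2 - n*m + m^2)) : IsCriticalLength L := by
  obtain ⟨k, l, hk, hl, hid⟩ := int_form hn hm hnm
  refine ⟨k, l, hk, hl, ?_⟩
  have hidR : ((k:ℝ)^2 + (l:ℝ)^2 + (k:ℝ)*(l:ℝ)) = (n:ℝ)^2 - n*m + m^2 := by
    exact_mod_cast hid
  have hL2 : L^2 = (2 * Real.pi)^2 * (((k:ℝ)^2 + (l:ℝ)^2 + (k:ℝ)*(l:ℝ)) / 3) := by
    rw [hidR]; nlinarith [hR]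
  have hq : (0:ℝ) ≤ ((k:ℝ)^2 + (l:ℝ)^2 + (k:ℝ)*(l:ℝ)) / 3 := by positivity
  have : L = Real.sqrt (L^2) := (Real.sqrt_sq hL.le).symm
  rw [this, hL2, Real.sqrt_mul (sq_nonneg _), Real.sqrt_sq (by positivity)]

open Real in
lemma rosier_forward (L : ℝ) (hL : 0 < L) (lam : ℂ) (y : ℝ → ℂ)
    (hy : ContDiff ℝ 3 y)
    (hODE : ∀ x ∈ Icc (0:ℝ) L, lam * y x + deriv y x + iteratedDeriv 3 y x = 0)
    (h00 : y 0 = 0) (h01 : deriv y 0 = 0) (hL0 : y L = 0) (hL1 : deriv y L = 0)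
    (hc : iteratedDeriv 2 y 0 ≠ 0) : IsCriticalLength L := by
  obtain ⟨μ₁, μ₂, μ₃, he1, he2, he3⟩ := exists_three_roots lam
  have hr1 : μ₁^3 + μ₁ + lam = 0 := by linear_combination μ₁^2*he1 - μ₁*he2 + he3
  have hr2 : μ₂^3 + μ₂ + lam = 0 := by linear_combination μ₂^2*he1 - μ₂*he2 + he3
  have hr3 : μ₃^3 + μ₃ + lam = 0 := by linear_combination μ₃^2*he1 - μ₃*he2 + he3
  by_cases h12 : μ₁ = μ₂
  · exfalso
    have hμ : μ₁^2 = -1/3 := by linear_combination (2*μ₁/3)*he1 - (1/3)*he2 + ((μ₁-μ₃)/3)*h12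
    have hlam : lam = 2*μ₁^3 := by linear_combination hr1 - 3*μ₁*hμ
    exact double_root_false L hL μ₁ lam hμ hlam y hy hODE h00 h01 hc hL0
  by_cases h13 : μ₁ = μ₃
  · exfalso
    have hμ : μ₁^2 = -1/3 := by linear_combination (2*μ₁/3)*he1 - (1/3)*he2 + ((μ₁-μ₂)/3)*h13
    have hlam : lam = 2*μ₁^3 := by linear_combination hr1 - 3*μ₁*hμ
    exact double_root_false L hL μ₁ lam hμ hlam y hy hODE h00 h01 hc hL0
  by_cases h23 : μ₂ = μ₃
  · exfalso
    have hμ : μ₂^2 = -1/3 := by linear_combination (2*μ₂/3)*he1 - (1/3)*he2 + ((μ₂-μ₁)/3)*h23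
    have hlam : lam = 2*μ₂^3 := by linear_combination hr2 - 3*μ₂*hμ
    exact double_root_false L hL μ₂ lam hμ hlam y hy hODE h00 h01 hc hL0
  -- distinct roots
  have hD : ((μ₁-μ₂)*(μ₂-μ₃)*(μ₃-μ₁)) ≠ 0 :=
    mul_ne_zero (mul_ne_zero (sub_ne_zero.mpr h12) (sub_ne_zero.mpr h23))
      (sub_ne_zero.mpr (Ne.symm h13))
  set c₀ := iteratedDeriv 2 y 0 with hc₀
  set cc := -c₀ / ((μ₁-μ₂)*(μ₂-μ₃)*(μ₃-μ₁)) with hccdef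
  have hcc : cc ≠ 0 := div_ne_zero (neg_ne_zero.mpr hc) hD
  set w := Wd μ₁ μ₂ μ₃ cc with hwdef
  have hw2 : iteratedDeriv 2 w 0 = c₀ := by
    rw [hwdef, Wd_itd2_zero, hccdef]
    field_simp
  have heq : EqOn y w (Icc 0 L) :=
    ode_unique lam L y w hy (W3_contDiff _ _ _ _ _ _ _ _ _)
      hODE (fun x _ => Wd_ode μ₁ μ₂ μ₃ cc lam hr1 hr2 hr3 x)
      (by rw [h00, hwdef, Wd_zero]) (by rw [h01, hwdef, Wd_deriv_zero]) (by rw [hw2])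
  have hLmem : L ∈ Icc (0:ℝ) L := right_mem_Icc.mpr hL.le
  have hwL : w L = 0 := by rw [← heq hLmem]; exact hL0
  have hwc : ContDiff ℝ 3 w := W3_contDiff _ _ _ _ _ _ _ _ _
  have hwL' : deriv w L = 0 :=
    ((eqOn_derivs hy hwc hL heq).1 hLmem).symm.trans hL1
  obtain ⟨hE12, hE13⟩ := Wd_boundary hcc h12 h13 h23 hwL hwL'
  obtain ⟨n, hn⟩ := Complex.exp_eq_exp_iff_exists_int.mp hE12
  obtain ⟨m, hm⟩ := Complex.exp_eq_exp_iff_exists_int.mp hE13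
  have hLne : (L:ℂ) ≠ 0 := by exact_mod_cast hL.ne'
  have hn' : (μ₁ - μ₂) * (L:ℂ) = n * (2*Real.pi*I) := by linear_combination hn
  have hm' : (μ₁ - μ₃) * (L:ℂ) = m * (2*Real.pi*I) := by linear_combination hm
  have hn0 : n ≠ 0 := by
    intro h; rw [h] at hn'; simp at hn'
    rcases hn' with h' | h'
    · exact h12 (sub_eq_zero.mp h')
    · exact hL.ne' h'
  have hm0 : m ≠ 0 := by
    intro h; rw [h] at hm'; simp at hm'
    rcases hm' with h' | h'
    · exact h13 (sub_eq_zero.mp h')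
    · exact hL.ne' h'
  have hnm : n ≠ m := by
    intro h
    apply h23
    have : (μ₂ - μ₃) * (L:ℂ) = 0 := by rw [h] at hn'; linear_combination hm' - hn'
    rcases mul_eq_zero.mp this with h' | h'
    · exact sub_eq_zero.mp h'
    · exact absurd h' hLne
  have hE : (μ₁-μ₂)^2 - (μ₁-μ₂)*(μ₁-μ₃) + (μ₁-μ₃)^2 = -3 := by
    linear_combination (μ₁+μ₂+μ₃)*he1 - 3*he2
  have h1 : ((n:ℂ)*(2*Real.pi*I))^2 - ((n:ℂ)*(2*Real.pi*I))*((m:ℂ)*(2*Real.pi*I))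
      + ((m:ℂ)*(2*Real.pi*I))^2 = -3*(L:ℂ)^2 := by
    rw [← hn', ← hm']; linear_combination (L:ℂ)^2 * hE
  have h2 : (3:ℂ)*(L:ℂ)^2 = 4*(Real.pi:ℂ)^2*((n:ℂ)^2 - (n:ℂ)*(m:ℂ) + (m:ℂ)^2) := by
    linear_combination h1 - (4*(Real.pi:ℂ)^2*((n:ℂ)^2 - (n:ℂ)*(m:ℂ) + (m:ℂ)^2))*Complex.I_sq
  have hR : 3 * L^2 = 4 * Real.pi^2 * ((n:ℝ)^2 - (n:ℝ)*(m:ℝ) + (m:ℝ)^2) := by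
    exact_mod_cast h2
  exact critical_of_sq hL hn0 hm0 hnm hR

set_option maxHeartbeats 1000000 in
open Real in
lemma rosier_exists (L : ℝ) (hL : 0 < L) (hcrit : IsCriticalLength L) (c : ℂ) :
    ∃ lam : ℂ, ∃ y : ℝ → ℂ, ContDiff ℝ 3 y ∧
      (∀ x ∈ Icc (0:ℝ) L, lam * y x + deriv y x + iteratedDeriv 3 y x = 0) ∧
      y 0 = 0 ∧ deriv y 0 = 0 ∧ y L = 0 ∧ deriv y L = 0 ∧ iteratedDeriv 2 y 0 = c := by
  obtain ⟨k, l, hk, hl, hLdef⟩ := hcrit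
  set q : ℝ := (k:ℝ)^2 + (l:ℝ)^2 + (k:ℝ)*(l:ℝ) with hqdef
  have hk1 : (1:ℝ) ≤ (k:ℝ) := by exact_mod_cast hk
  have hl1 : (1:ℝ) ≤ (l:ℝ) := by exact_mod_cast hl
  have hqpos : 0 < q := by nlinarith [hk1, hl1]
  have hL2 : L^2 = 4*π^2*q/3 := by
    rw [hLdef, mul_pow, mul_pow, Real.sq_sqrt (by positivity : (0:ℝ) ≤ q/3)]
    ring
  set r : ℝ := 2*π/(3*L) with hrdef
  have hrpos : 0 < r := by rw [hrdef]; positivity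
  have hrL : r * L = 2*π/3 := by rw [hrdef]; field_simp
  have h9 : 9*r^2*L^2 = 4*π^2 := by
    have h3 : r * (3*L) = 2*π := by
      rw [hrdef]; field_simp
    linear_combination (r*(3*L) + 2*π)*h3
  have hquad : 4*π^2*(3*q*r^2) = 4*π^2 := by linear_combination h9 - 9*r^2*hL2
  have hr2 : 3*q*r^2 = 1 := by
    have hπ : (4*π^2 : ℝ) ≠ 0 := by positivity
    have := mul_left_cancel₀ hπ (hquad.trans (mul_one (4*π^2)).symm)
    exact this
  set t₁ : ℝ := (2*(k:ℝ) + l)*r with ht₁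
  set t₂ : ℝ := ((l:ℝ) - k)*r with ht₂
  set t₃ : ℝ := -((k:ℝ) + 2*l)*r with ht₃
  set μ₁ : ℂ := (t₁:ℂ)*I with hμ₁
  set μ₂ : ℂ := (t₂:ℂ)*I with hμ₂
  set μ₃ : ℂ := (t₃:ℂ)*I with hμ₃
  have he1 : μ₁ + μ₂ + μ₃ = 0 := by
    rw [hμ₁, hμ₂, hμ₃, ht₁, ht₂, ht₃]; push_cast; ring
  have hS : t₁*t₂ + t₁*t₃ + t₂*t₃ = -1 := by
    rw [ht₁, ht₂, ht₃]; linear_combination -hr2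
  have hSC : (t₁:ℂ)*t₂ + (t₁:ℂ)*t₃ + (t₂:ℂ)*t₃ = -1 := by exact_mod_cast hS
  have he2 : μ₁*μ₂ + μ₁*μ₃ + μ₂*μ₃ = 1 := by
    rw [hμ₁, hμ₂, hμ₃]
    linear_combination ((t₁:ℂ)*t₂ + (t₁:ℂ)*t₃ + (t₂:ℂ)*t₃)*Complex.I_sq - hSC
  set lam : ℂ := -(μ₁*μ₂*μ₃) with hlam
  have he3 : μ₁*μ₂*μ₃ = -lam := by rw [hlam]; ring
  have hr1 : μ₁^3 + μ₁ + lam = 0 := by linear_combination μ₁^2*he1 - μ₁*he2 + he3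
  have hrr2 : μ₂^3 + μ₂ + lam = 0 := by linear_combination μ₂^2*he1 - μ₂*he2 + he3
  have hrr3 : μ₃^3 + μ₃ + lam = 0 := by linear_combination μ₃^2*he1 - μ₃*he2 + he3
  have ht12 : t₁ ≠ t₂ := by
    have : t₂ < t₁ := by rw [ht₁, ht₂]; nlinarith [hrpos, hk1]
    exact (ne_of_gt this)
  have ht13 : t₁ ≠ t₃ := by
    have : t₃ < t₁ := by rw [ht₁, ht₃]; nlinarith [hrpos, hk1, hl1]
    exact (ne_of_gt this)
  have ht23 : t₂ ≠ t₃ := by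
    have : t₃ < t₂ := by rw [ht₂, ht₃]; nlinarith [hrpos, hl1]
    exact (ne_of_gt this)
  have cast_ne : ∀ a b : ℝ, a ≠ b → (a:ℂ)*I ≠ (b:ℂ)*I := by
    intro a b hab h
    have : (a:ℂ) = b := mul_right_cancel₀ Complex.I_ne_zero h
    exact hab (by exact_mod_cast this)
  have h12 : μ₁ ≠ μ₂ := cast_ne _ _ ht12
  have h13 : μ₁ ≠ μ₃ := cast_ne _ _ ht13
  have h23 : μ₂ ≠ μ₃ := cast_ne _ _ ht23
  have hD : ((μ₁-μ₂)*(μ₂-μ₃)*(μ₃-μ₁)) ≠ 0 :=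
    mul_ne_zero (mul_ne_zero (sub_ne_zero.mpr h12) (sub_ne_zero.mpr h23))
      (sub_ne_zero.mpr (Ne.symm h13))
  set cc : ℂ := -c / ((μ₁-μ₂)*(μ₂-μ₃)*(μ₃-μ₁)) with hccdef
  refine ⟨lam, Wd μ₁ μ₂ μ₃ cc, W3_contDiff _ _ _ _ _ _ _ _ _,
    fun x _ => Wd_ode μ₁ μ₂ μ₃ cc lam hr1 hrr2 hrr3 x,
    Wd_zero _ _ _ _, Wd_deriv_zero _ _ _ _, ?_, ?_, ?_⟩
  · -- value at L
    have hE12 : Complex.exp (μ₁ * L) = Complex.exp (μ₂ * L) := by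
      refine Complex.exp_eq_exp_iff_exists_int.mpr ⟨k, ?_⟩
      have htL : (t₁ - t₂)*L = 2*π*k := by
        rw [ht₁, ht₂]; push_cast; linear_combination 3*(k:ℝ)*hrL
      have htLC : ((t₁:ℂ) - t₂)*L = 2*(π:ℂ)*k := by exact_mod_cast htL
      rw [hμ₁, hμ₂]
      linear_combination I*htLC
    have hE13 : Complex.exp (μ₁ * L) = Complex.exp (μ₃ * L) := by
      refine Complex.exp_eq_exp_iff_exists_int.mpr ⟨(k:ℤ)+(l:ℤ), ?_⟩
      have htL : (t₁ - t₃)*L = 2*π*((k:ℝ)+l) := by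
        rw [ht₁, ht₃]; push_cast; linear_combination (3*(k:ℝ)+3*(l:ℝ))*hrL
      have htLC : ((t₁:ℂ) - t₃)*L = 2*(π:ℂ)*((k:ℂ)+l) := by exact_mod_cast htL
      rw [hμ₁, hμ₃]
      push_cast
      linear_combination I*htLC
    simp only [Wd, W3, mf]
    rw [← hE12, ← hE13]
    ring
  · -- deriv at L
    have hE12 : Complex.exp (μ₁ * L) = Complex.exp (μ₂ * L) := by
      refine Complex.exp_eq_exp_iff_exists_int.mpr ⟨k, ?_⟩
      have htL : (t₁ - t₂)*L = 2*π*k := by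
        rw [ht₁, ht₂]; push_cast; linear_combination 3*(k:ℝ)*hrL
      have htLC : ((t₁:ℂ) - t₂)*L = 2*(π:ℂ)*k := by exact_mod_cast htL
      rw [hμ₁, hμ₂]
      linear_combination I*htLC
    have hE13 : Complex.exp (μ₁ * L) = Complex.exp (μ₃ * L) := by
      refine Complex.exp_eq_exp_iff_exists_int.mpr ⟨(k:ℤ)+(l:ℤ), ?_⟩
      have htL : (t₁ - t₃)*L = 2*π*((k:ℝ)+l) := by
        rw [ht₁, ht₃]; push_cast; linear_combination (3*(k:ℝ)+3*(l:ℝ))*hrL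
      have htLC : ((t₁:ℂ) - t₃)*L = 2*(π:ℂ)*((k:ℂ)+l) := by exact_mod_cast htL
      rw [hμ₁, hμ₃]
      push_cast
      linear_combination I*htLC
    rw [Wd, W3_deriv]
    simp only [W3, mf]
    rw [← hE12, ← hE13]
    ring
  · rw [Wd_itd2_zero, hccdef]
    field_simp

lemma zero_fn_facts : deriv (fun _ : ℝ => (0:ℂ)) = (fun _ => 0) ∧
    iteratedDeriv 2 (fun _ : ℝ => (0:ℂ)) = (fun _ => 0) ∧
    iteratedDeriv 3 (fun _ : ℝ => (0:ℂ)) = (fun _ => 0) := by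
  have h1 : deriv (fun _ : ℝ => (0:ℂ)) = (fun _ => 0) := by
    funext x; exact deriv_const x 0
  refine ⟨h1, ?_, ?_⟩
  · rw [itd2_eq, h1, h1]
  · rw [itd3_eq, h1, h1, h1]

lemma itd2_zero_of_eqOn_zero {L : ℝ} (hL : 0 < L) {y : ℝ → ℂ} (hy : ContDiff ℝ 3 y)
    (h : ∀ x ∈ Icc (0:ℝ) L, y x = 0) : iteratedDeriv 2 y 0 = 0 := by
  have heq : EqOn y (fun _ => (0:ℂ)) (Icc 0 L) := fun x hx => h x hx
  have := (eqOn_derivs hy contDiff_const hL heq).2 (left_mem_Icc.mpr hL.le)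
  rw [this, zero_fn_facts.2.1]

lemma eqOn_zero_of_itd2_zero {L : ℝ} (hL : 0 < L) {lam : ℂ} {y : ℝ → ℂ} (hy : ContDiff ℝ 3 y)
    (hODE : ∀ x ∈ Icc (0:ℝ) L, lam * y x + deriv y x + iteratedDeriv 3 y x = 0)
    (h00 : y 0 = 0) (h01 : deriv y 0 = 0) (h02 : iteratedDeriv 2 y 0 = 0) :
    ∀ x ∈ Icc (0:ℝ) L, y x = 0 := by
  have hzode : ∀ x ∈ Icc (0:ℝ) L, lam * (fun _ => (0:ℂ)) x + deriv (fun _ => (0:ℂ)) x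
      + iteratedDeriv 3 (fun _ => (0:ℂ)) x = 0 := by
    intro x _
    rw [zero_fn_facts.1, zero_fn_facts.2.2]
    simp
  have := ode_unique lam L y (fun _ => 0) hy contDiff_const hODE hzode
    (by rw [h00]) (by rw [h01, zero_fn_facts.1]) (by rw [h02, zero_fn_facts.2.1])
  exact fun x hx => this hx

theorem stmt10 (N : ℕ) (hN : 0 < N) (ℓ : Fin N → ℝ) (hℓ : ∀ i, 0 < ℓ i) :
    (∃ lam : Fin N → ℂ, ∃ y : Fin N → ℝ → ℂ,
      (∀ i, ContDiff ℝ 3 (y i)) ∧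
      (∃ i, ∃ x ∈ Set.Icc (0:ℝ) (ℓ i), y i x ≠ 0) ∧
      (∀ i, ∀ x ∈ Set.Icc (0:ℝ) (ℓ i),
        lam i * y i x + deriv (y i) x + iteratedDeriv 3 (y i) x = 0) ∧
      (∀ i, y i (ℓ i) = 0 ∧ deriv (y i) (ℓ i) = 0) ∧
      (∀ i, y i 0 = 0 ∧ deriv (y i) 0 = 0) ∧
      ∑ i, iteratedDeriv 2 (y i) 0 = 0)
    ↔ ∃ i j : Fin N, i ≠ j ∧ IsCriticalLength (ℓ i) ∧ IsCriticalLength (ℓ j) := by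
  constructor
  · rintro ⟨lam, y, hcd, ⟨i0, x0, hx0, hyx0⟩, hOde, hBL, hB0, hsum⟩
    set d : Fin N → ℂ := fun i => iteratedDeriv 2 (y i) 0 with hd
    have claim2 : ∀ i, d i ≠ 0 → IsCriticalLength (ℓ i) := fun i hi =>
      rosier_forward (ℓ i) (hℓ i) (lam i) (y i) (hcd i) (hOde i)
        (hB0 i).1 (hB0 i).2 (hBL i).1 (hBL i).2 hi
    have hi0 : d i0 ≠ 0 := by
      intro h0
      exact hyx0 (eqOn_zero_of_itd2_zero (hℓ i0) (hcd i0) (hOde i0)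
        (hB0 i0).1 (hB0 i0).2 h0 x0 hx0)
    have hj : ∃ j, j ≠ i0 ∧ d j ≠ 0 := by
      by_contra hcon
      push_neg at hcon
      apply hi0
      have : ∑ i, d i = d i0 :=
        Finset.sum_eq_single i0 (fun b _ hb => hcon b hb) (fun h => absurd (Finset.mem_univ i0) h)
      rw [← this]
      exact hsum
    obtain ⟨j, hji, hdj⟩ := hj
    exact ⟨i0, j, Ne.symm hji, claim2 i0 hi0, claim2 j hdj⟩
  · rintro ⟨i, j, hij, hci, hcj⟩
    obtain ⟨lami, yi, hicd, hiode, hi0, hi1, hiL, hiL', hi2⟩ :=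
      rosier_exists (ℓ i) (hℓ i) hci 1
    obtain ⟨lamj, yj, hjcd, hjode, hj0, hj1, hjL, hjL', hj2⟩ :=
      rosier_exists (ℓ j) (hℓ j) hcj (-1)
    classical
    refine ⟨fun t => if t = i then lami else if t = j then lamj else 0,
      fun t => if t = i then yi else if t = j then yj else fun _ => 0, ?_, ?_, ?_, ?_, ?_, ?_⟩
    · intro t
      by_cases h1 : t = i
      · simpa [h1] using hicd
      · by_cases h2 : t = j
        · simpa [h1, h2, Ne.symm hij] using hjcd
        · simp [h1, h2]
          exact contDiff_const
    · refine ⟨i, ?_⟩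
      simp only [if_pos rfl]
      by_contra hcon
      push_neg at hcon
      have := itd2_zero_of_eqOn_zero (hℓ i) hicd hcon
      rw [hi2] at this
      exact one_ne_zero this
    · intro t x hx
      by_cases h1 : t = i
      · subst h1; simpa using hiode x hx
      · by_cases h2 : t = j
        · subst h2; simp [h1] at hx ⊢; exact hjode x hx
        · simp only [if_neg h1, if_neg h2]
          rw [zero_fn_facts.1, zero_fn_facts.2.2]
          simp
    · intro t
      by_cases h1 : t = i
      · subst h1; simpa using ⟨hiL, hiL'⟩
      · by_cases h2 : t = j
        · subst h2; simp [h1]; exact ⟨hjL, hjL'⟩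
        · simp only [if_neg h1, if_neg h2]
          rw [zero_fn_facts.1]
          simp
    · intro t
      by_cases h1 : t = i
      · subst h1; simpa using ⟨hi0, hi1⟩
      · by_cases h2 : t = j
        · subst h2; simp [h1]; exact ⟨hj0, hj1⟩
        · simp only [if_neg h1, if_neg h2]
          rw [zero_fn_facts.1]
          simp
    · have hterm : ∀ t : Fin N, iteratedDeriv 2
          ((fun t => if t = i then yi else if t = j then yj else fun _ => (0:ℂ)) t) 0
          = (if t = i then (1:ℂ) else 0) + (if t = j then (-1:ℂ) else 0) := by
        intro t
        by_cases h1 : t = i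
        · subst h1
          have : t ≠ j := hij
          simp [this, hi2]
        · by_cases h2 : t = j
          · subst h2; simp [h1, hj2]
          · simp only [if_neg h1, if_neg h2]
            rw [zero_fn_facts.2.1]
            simp [h1, h2]
      rw [Finset.sum_congr rfl (fun t _ => hterm t)]
      rw [Finset.sum_add_distrib]
      simp [Finset.sum_ite_eq' Finset.univ i, Finset.sum_ite_eq' Finset.univ j]
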